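/- Let r ≥ 1, let n ≥ 2 be an integer, and set N = (2⌈r⌉+2)n − (3⌈r⌉+2). Let F₁,…,F_n be families of axes-aligned r-fat rectangles, each containing at least N rectangles, such that the rectangles within each family are pairwise disjoint. Then one can choose one rectangle Q_i ∈ F_i from each family so that Q₁,…,Q_n are pairwise disjoint. -/

import Mathlib

open MeasureTheory

noncomputable section

/-- A point of the plane. -/
abbrev Pt := ℝ × ℝ

/-- The ℓ∞ distance between two points of the plane. -/
def linfDist (p q : Pt) : ℝ := max |p.1 - q.1| |p.2 - q.2|

/-- Two pieces of land are `s`-separated: every pair of points, one from each piece,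
is at ℓ∞ distance at least `s`. -/
def SepSets (s : ℝ) (A B : Set Pt) : Prop := ∀ p ∈ A, ∀ q ∈ B, s ≤ linfDist p q

/-- An axes-aligned rectangle `[a,b] × [c,d]` with `a < b` and `c < d`. -/
structure Rect where
  a : ℝ
  b : ℝ
  c : ℝ
  d : ℝ
  hab : a < b
  hcd : c < d

/-- The set of points of a rectangle. -/
def Rect.set (R : Rect) : Set Pt := Set.Icc R.a R.b ×ˢ Set.Icc R.c R.d

/-- The length of the shorter side of a rectangle. -/
def Rect.short (R : Rect) : ℝ := min (R.b - R.a) (R.d - R.c)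

/-- The length of the longer side of a rectangle. -/
def Rect.long (R : Rect) : ℝ := max (R.b - R.a) (R.d - R.c)

/-- A rectangle is `r`-fat if its longer side is at most `r` times its shorter side. -/
def Rect.Fat (r : ℝ) (R : Rect) : Prop := R.long ≤ r * R.short

/-- The value of a piece `Z` under the density `f`. -/
def val (f : Pt → ℝ) (Z : Set Pt) : ℝ := ∫ p in Z, f p

/-- The 1-out-of-`k` maximin share of an agent with density `f` on land `L`
with separation parameter `s`: the supremum over families of `k` axes-aligned
rectangles inside `L`, pairwise intersecting in zero measure and pairwise
`s`-separated, of the minimum value of a rectangle. -/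
def MMS (f : Pt → ℝ) (L : Set Pt) (s : ℝ) (k : ℕ) : ℝ :=
  sSup {t : ℝ | ∃ P : Fin k → Rect,
    (∀ j, (P j).set ⊆ L) ∧
    (∀ i j, i ≠ j → volume ((P i).set ∩ (P j).set) = 0) ∧
    (∀ i j, i ≠ j → SepSets s ((P i).set) ((P j).set)) ∧
    (∀ j, t ≤ val f ((P j).set))}

/-- A valuation given by density `f` is `s`-normalized: there are finitely many
pairwise `s`-separated axes-aligned rectangles, each of value at most 1,
such that `f` vanishes outside their union. -/
def SNormalized (s : ℝ) (f : Pt → ℝ) : Prop :=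
  ∃ (N : ℕ) (Q : Fin N → Rect),
    (∀ i j, i ≠ j → SepSets s ((Q i).set) ((Q j).set)) ∧
    (∀ i, val f ((Q i).set) ≤ 1) ∧
    (∀ p, p ∉ ⋃ i, (Q i).set → f p = 0)

/-- The unit square `[0,1] × [0,1]`. -/
def unitSquare : Set Pt := Set.Icc (0 : ℝ) 1 ×ˢ Set.Icc (0 : ℝ) 1

/-- `Guillotine s a0 a1 b0 b1 P`: the family `P` of rectangles forms an
`s`-separated guillotine partition of `[a0,a1] × [b0,b1]`. -/
inductive Guillotine (s : ℝ) : ℝ → ℝ → ℝ → ℝ → List Rect → Prop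
  | single (a0 a1 b0 b1 : ℝ) (P : Rect)
      (h : P.set ⊆ Set.Icc a0 a1 ×ˢ Set.Icc b0 b1) :
      Guillotine s a0 a1 b0 b1 [P]
  | vert (a0 a1 b0 b1 a : ℝ) (h1 : a0 < a) (h2 : a < a1 - s)
      (P1 P2 : List Rect)
      (g1 : Guillotine s a0 a b0 b1 P1)
      (g2 : Guillotine s (a + s) a1 b0 b1 P2) :
      Guillotine s a0 a1 b0 b1 (P1 ++ P2)
  | horiz (a0 a1 b0 b1 b : ℝ) (h1 : b0 < b) (h2 : b < b1 - s)
      (P1 P2 : List Rect)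
      (g1 : Guillotine s a0 a1 b0 b P1)
      (g2 : Guillotine s a0 a1 (b + s) b1 P2) :
      Guillotine s a0 a1 b0 b1 (P1 ++ P2)


namespace StmtAux

lemma Rect.short_pos (R : Rect) : 0 < R.short :=
  lt_min (sub_pos.2 R.hab) (sub_pos.2 R.hcd)

lemma vol_Icc_prod (a b c d : ℝ) :
    volume (Set.Icc a b ×ˢ Set.Icc c d) = ENNReal.ofReal (b - a) * ENNReal.ofReal (d - c) := by
  rw [Measure.volume_eq_prod, Measure.prod_prod, Real.volume_Icc, Real.volume_Icc]

lemma inter_rect (P Q : Rect) :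
    P.set ∩ Q.set =
      Set.Icc (max P.a Q.a) (min P.b Q.b) ×ˢ Set.Icc (max P.c Q.c) (min P.d Q.d) := by
  simp only [Rect.set, Set.prod_inter_prod, Set.Icc_inter_Icc]

lemma vol_inter_ne_zero_iff (P Q : Rect) :
    volume (P.set ∩ Q.set) ≠ 0 ↔
      max P.a Q.a < min P.b Q.b ∧ max P.c Q.c < min P.d Q.d := by
  rw [inter_rect, vol_Icc_prod, Ne, mul_eq_zero, ENNReal.ofReal_eq_zero,
    ENNReal.ofReal_eq_zero]
  push_neg
  constructor
  · rintro ⟨h1, h2⟩; constructor <;> linarith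
  · rintro ⟨h1, h2⟩; constructor <;> linarith

lemma quad {x y u v : ℝ} (h : max x y < min u v) : x < u ∧ x < v ∧ y < u ∧ y < v :=
  ⟨lt_of_le_of_lt (le_max_left _ _) (h.trans_le (min_le_left _ _)),
   lt_of_le_of_lt (le_max_left _ _) (h.trans_le (min_le_right _ _)),
   lt_of_le_of_lt (le_max_right _ _) (h.trans_le (min_le_left _ _)),
   lt_of_le_of_lt (le_max_right _ _) (h.trans_le (min_le_right _ _))⟩

/-- The integer mark of an interval starting at `lo`, relative to base `C` and spacing `t`. -/
def markZ (t C lo : ℝ) : ℤ := if lo ≤ C then 0 else ⌈(lo - C) / t⌉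

lemma markZ_nonneg (t C lo : ℝ) (ht : 0 < t) : 0 ≤ markZ t C lo := by
  unfold markZ; split
  · exact le_refl 0
  · next h =>
    push_neg at h
    exact Int.ceil_nonneg (div_nonneg (by linarith) ht.le)

lemma markZ_le (t C D lo : ℝ) (ht : 0 < t) (hD : lo < D) (hCD : C ≤ D) :
    markZ t C lo ≤ ⌈(D - C) / t⌉ := by
  unfold markZ; split
  · exact Int.ceil_nonneg (div_nonneg (by linarith) ht.le)
  · exact Int.ceil_le_ceil ((div_le_div_iff_of_pos_right ht).2 (by linarith))

lemma markZ_ge (t C lo : ℝ) (ht : 0 < t) : lo ≤ C + markZ t C lo * t := by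
  unfold markZ; split
  · next h => simpa using h
  · next h =>
    have h1 := Int.le_ceil ((lo - C) / t)
    have h2 : lo - C ≤ (⌈(lo - C) / t⌉ : ℝ) * t := (div_le_iff₀ ht).1 h1
    push_cast
    linarith

lemma markZ_lt (t C lo hi : ℝ) (ht : 0 < t) (hlen : t ≤ hi - lo) (hC : C < hi) :
    C + markZ t C lo * t < hi := by
  unfold markZ; split
  · simpa using hC
  · next h =>
    have h1 := Int.ceil_lt_add_one ((lo - C) / t)
    have h2 : (⌈(lo - C) / t⌉ : ℝ) * t < ((lo - C) / t + 1) * t :=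
      mul_lt_mul_of_pos_right h1 ht
    rw [add_mul, div_mul_cancel₀ _ ht.ne'] at h2
    push_cast
    linarith

/-- 1D counting lemma: pairwise interior-disjoint intervals of length ≥ t
meeting `(C, D)`. -/
lemma count_1d {ι : Type*} (t C D : ℝ) (ht : 0 < t) (hCD : C < D)
    (s : Finset ι) (lo hi : ι → ℝ)
    (hlen : ∀ i ∈ s, t ≤ hi i - lo i)
    (hC : ∀ i ∈ s, C < hi i)
    (hD : ∀ i ∈ s, lo i < D)
    (hdisj : ∀ i ∈ s, ∀ j ∈ s, i ≠ j → min (hi i) (hi j) ≤ max (lo i) (lo j)) :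
    (s.card : ℤ) ≤ ⌈(D - C) / t⌉ + 1 := by
  classical
  set M := ⌈(D - C) / t⌉ with hM
  have hM0 : 0 ≤ M := Int.ceil_nonneg (div_nonneg (by linarith) ht.le)
  have hcard : s.card ≤ (Finset.Icc (0 : ℤ) M).card := by
    apply Finset.card_le_card_of_injOn (fun i => markZ t C (lo i))
    · intro i his
      simp only [Finset.mem_coe, Finset.mem_Icc]
      exact ⟨markZ_nonneg _ _ _ ht, markZ_le t C D (lo i) ht (hD i his) hCD.le⟩
    · intro i his j hjs heq
      simp only at heq
      by_contra hne
      have hd := hdisj i his j hjs hne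
      have g1 : lo i ≤ C + markZ t C (lo i) * t := markZ_ge _ _ _ ht
      have g2 : C + markZ t C (lo i) * t < hi i :=
        markZ_lt t C (lo i) (hi i) ht (hlen i his) (hC i his)
      have g3 : lo j ≤ C + markZ t C (lo i) * t := by
        rw [heq]; exact markZ_ge _ _ _ ht
      have g4 : C + markZ t C (lo i) * t < hi j := by
        rw [heq]; exact markZ_lt t C (lo j) (hi j) ht (hlen j hjs) (hC j hjs)
      have hmax : max (lo i) (lo j) ≤ C + markZ t C (lo i) * t := max_le g1 g3
      have hmin : C + markZ t C (lo i) * t < min (hi i) (hi j) := lt_min g2 g4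
      linarith
  have h2 : (Finset.Icc (0 : ℤ) M).card = (M + 1).toNat := by
    rw [Int.card_Icc]; omega
  rw [h2] at hcard
  omega

lemma Rect.short_le_w (R : Rect) : R.short ≤ R.b - R.a := min_le_left _ _
lemma Rect.short_le_h (R : Rect) : R.short ≤ R.d - R.c := min_le_right _ _
lemma Rect.w_le_fat {r : ℝ} {R : Rect} (h : R.Fat r) : R.b - R.a ≤ r * R.short :=
  le_trans (le_max_left _ _) h
lemma Rect.h_le_fat {r : ℝ} {R : Rect} (h : R.Fat r) : R.d - R.c ≤ r * R.short :=
  le_trans (le_max_right _ _) h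

/-- 2D blocking lemma: the number of pairwise (measure-)disjoint rectangles, each
with short side at least `R.short`, that all overlap the `r`-fat rectangle `R`,
is at most `2⌈r⌉ + 2`. -/
lemma block_count (r : ℝ) (hr : 1 ≤ r) (R : Rect) (hRfat : R.Fat r)
    (s : Finset Rect)
    (hshort : ∀ Q ∈ s, R.short ≤ Q.short)
    (hdisj : ∀ Q ∈ s, ∀ Q' ∈ s, Q ≠ Q' → volume (Q.set ∩ Q'.set) = 0)
    (hover : ∀ Q ∈ s, volume (Q.set ∩ R.set) ≠ 0) :
    (s.card : ℤ) ≤ 2 * ⌈r⌉ + 2 := by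
  classical
  set t := R.short with hts
  have ht : 0 < t := Rect.short_pos R
  set W := ⌈(R.b - R.a) / t⌉ with hW
  set H := ⌈(R.d - R.c) / t⌉ with hH
  have hW0 : 0 ≤ W := Int.ceil_nonneg (div_nonneg (by linarith [R.hab]) ht.le)
  have hH0 : 0 ≤ H := Int.ceil_nonneg (div_nonneg (by linarith [R.hcd]) ht.le)
  have hQW : ∀ Q ∈ s, t ≤ Q.b - Q.a := fun Q hQ =>
    le_trans (hshort Q hQ) (Rect.short_le_w Q)
  have hQH : ∀ Q ∈ s, t ≤ Q.d - Q.c := fun Q hQ =>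
    le_trans (hshort Q hQ) (Rect.short_le_h Q)
  have hcard : s.card ≤ (Finset.Icc (0 : ℤ) W ×ˢ Finset.Icc (0 : ℤ) H).card := by
    apply Finset.card_le_card_of_injOn
      (fun Q => (markZ t R.a Q.a, markZ t R.c Q.c))
    · intro Q hQ
      obtain ⟨hx, hy⟩ := (vol_inter_ne_zero_iff Q R).1 (hover Q hQ)
      obtain ⟨_, hx1, hx2, _⟩ := quad hx
      obtain ⟨_, hy1, hy2, _⟩ := quad hy
      simp only [Finset.mem_coe, Finset.mem_product, Finset.mem_Icc]
      exact ⟨⟨markZ_nonneg _ _ _ ht, markZ_le t R.a R.b Q.a ht hx1 R.hab.le⟩,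
        ⟨markZ_nonneg _ _ _ ht, markZ_le t R.c R.d Q.c ht hy1 R.hcd.le⟩⟩
    · intro Q hQs Q' hQs' heq
      simp only [Prod.mk.injEq] at heq
      by_contra hne
      obtain ⟨hx, hy⟩ := (vol_inter_ne_zero_iff Q R).1 (hover Q hQs)
      obtain ⟨hx', hy'⟩ := (vol_inter_ne_zero_iff Q' R).1 (hover Q' hQs')
      obtain ⟨_, _, hxa, _⟩ := quad hx
      obtain ⟨_, _, hya, _⟩ := quad hy
      obtain ⟨_, _, hxa', _⟩ := quad hx'
      obtain ⟨_, _, hya', _⟩ := quad hy'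
      have g1 : Q.a ≤ R.a + markZ t R.a Q.a * t := markZ_ge _ _ _ ht
      have g2 : R.a + markZ t R.a Q.a * t < Q.b :=
        markZ_lt t R.a Q.a Q.b ht (hQW Q hQs) hxa
      have g3 : Q'.a ≤ R.a + markZ t R.a Q.a * t := by
        rw [heq.1]; exact markZ_ge _ _ _ ht
      have g4 : R.a + markZ t R.a Q.a * t < Q'.b := by
        rw [heq.1]; exact markZ_lt t R.a Q'.a Q'.b ht (hQW Q' hQs') hxa'
      have k1 : Q.c ≤ R.c + markZ t R.c Q.c * t := markZ_ge _ _ _ ht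
      have k2 : R.c + markZ t R.c Q.c * t < Q.d :=
        markZ_lt t R.c Q.c Q.d ht (hQH Q hQs) hya
      have k3 : Q'.c ≤ R.c + markZ t R.c Q.c * t := by
        rw [heq.2]; exact markZ_ge _ _ _ ht
      have k4 : R.c + markZ t R.c Q.c * t < Q'.d := by
        rw [heq.2]; exact markZ_lt t R.c Q'.c Q'.d ht (hQH Q' hQs') hya'
      have : volume (Q.set ∩ Q'.set) ≠ 0 := by
        rw [vol_inter_ne_zero_iff]
        exact ⟨lt_of_le_of_lt (max_le g1 g3) (lt_min g2 g4),
          lt_of_le_of_lt (max_le k1 k3) (lt_min k2 k4)⟩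
      exact this (hdisj Q hQs Q' hQs' hne)
  have hprod : ((Finset.Icc (0 : ℤ) W ×ˢ Finset.Icc (0 : ℤ) H).card : ℤ)
      = (W + 1) * (H + 1) := by
    have e1 : ((Finset.Icc (0 : ℤ) W).card : ℤ) = W + 1 := by rw [Int.card_Icc]; omega
    have e2 : ((Finset.Icc (0 : ℤ) H).card : ℤ) = H + 1 := by rw [Int.card_Icc]; omega
    rw [Finset.card_product]
    push_cast
    push_cast at e1 e2
    rw [e1, e2]
  have hcard' : (s.card : ℤ) ≤ (W + 1) * (H + 1) := by
    rw [← hprod]; exact_mod_cast hcard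
  have hWH : (W + 1) * (H + 1) ≤ 2 * ⌈r⌉ + 2 := by
    rcases le_total (R.b - R.a) (R.d - R.c) with hwh | hwh
    · have htw : t = R.b - R.a := min_eq_left hwh
      have hW1 : W = 1 := by
        rw [hW, htw, div_self (by linarith [R.hab] : R.b - R.a ≠ 0)]
        exact Int.ceil_one
      have hHr : H ≤ ⌈r⌉ := by
        apply Int.ceil_le_ceil
        rw [div_le_iff₀ ht]
        calc R.d - R.c ≤ r * R.short := Rect.h_le_fat hRfat
          _ = r * t := by rw [hts]
      rw [hW1]; nlinarith
    · have htw : t = R.d - R.c := min_eq_right hwh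
      have hH1 : H = 1 := by
        rw [hH, htw, div_self (by linarith [R.hcd] : R.d - R.c ≠ 0)]
        exact Int.ceil_one
      have hWr : W ≤ ⌈r⌉ := by
        apply Int.ceil_le_ceil
        rw [div_le_iff₀ ht]
        calc R.b - R.a ≤ r * R.short := Rect.w_le_fat hRfat
          _ = r * t := by rw [hts]
      rw [hH1]; nlinarith
  linarith

/-- Base case helper: two families `A`, `B` with all cross pairs overlapping,
`R ∈ A` of minimal short side (relative to `B`): contradiction. -/
lemma base_helper (r : ℝ) (hr : 1 ≤ r) (A B : Finset Rect)
    (hA2 : ∃ a₁ ∈ A, ∃ a₂ ∈ A, a₁ ≠ a₂)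
    (hBcard : ⌈r⌉ + 2 ≤ (B.card : ℤ))
    (hApair : ∀ Q ∈ A, ∀ Q' ∈ A, Q ≠ Q' → volume (Q.set ∩ Q'.set) = 0)
    (hBpair : ∀ Q ∈ B, ∀ Q' ∈ B, Q ≠ Q' → volume (Q.set ∩ Q'.set) = 0)
    (hcross : ∀ a ∈ A, ∀ b ∈ B, volume (a.set ∩ b.set) ≠ 0)
    (R : Rect) (hRA : R ∈ A) (hRfat : R.Fat r)
    (hmin : ∀ b ∈ B, R.short ≤ b.short) : False := by
  classical
  have ht : 0 < R.short := Rect.short_pos R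
  have hoverR : ∀ b ∈ B, max R.a b.a < min R.b b.b ∧ max R.c b.c < min R.d b.d :=
    fun b hb => (vol_inter_ne_zero_iff R b).1 (hcross R hRA b hb)
  -- ceilings
  have hcw : ⌈(R.b - R.a) / R.short⌉ ≤ ⌈r⌉ := by
    apply Int.ceil_le_ceil
    rw [div_le_iff₀ ht]
    exact Rect.w_le_fat hRfat
  have hch : ⌈(R.d - R.c) / R.short⌉ ≤ ⌈r⌉ := by
    apply Int.ceil_le_ceil
    rw [div_le_iff₀ ht]
    exact Rect.h_le_fat hRfat
  by_cases hy : ∀ b ∈ B, ∀ b' ∈ B, b ≠ b' → min b.d b'.d ≤ max b.c b'.c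
  · have := count_1d R.short R.c R.d ht R.hcd B Rect.c Rect.d
      (fun b hb => le_trans (hmin b hb) (Rect.short_le_h b))
      (fun b hb => (quad (hoverR b hb).2).2.1)
      (fun b hb => (quad (hoverR b hb).2).2.2.1)
      hy
    linarith
  · push_neg at hy
    obtain ⟨b₁, hb₁, b₂, hb₂, hne12, hylt⟩ := hy
    have hx12 : min b₁.b b₂.b ≤ max b₁.a b₂.a := by
      by_contra hcon
      push_neg at hcon
      exact (vol_inter_ne_zero_iff b₁ b₂).2 ⟨hcon, hylt⟩ (hBpair b₁ hb₁ b₂ hb₂ hne12)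
    by_cases hx : ∀ b ∈ B, ∀ b' ∈ B, b ≠ b' → min b.b b'.b ≤ max b.a b'.a
    · have := count_1d R.short R.a R.b ht R.hab B Rect.a Rect.b
        (fun b hb => le_trans (hmin b hb) (Rect.short_le_w b))
        (fun b hb => (quad (hoverR b hb).1).2.1)
        (fun b hb => (quad (hoverR b hb).1).2.2.1)
        hx
      linarith
    · push_neg at hx
      obtain ⟨b₃, hb₃, b₄, hb₄, hne34, hxlt⟩ := hx
      have hy34 : min b₃.d b₄.d ≤ max b₃.c b₄.c := by
        by_contra hcon
        push_neg at hcon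
        exact (vol_inter_ne_zero_iff b₃ b₄).2 ⟨hxlt, hcon⟩ (hBpair b₃ hb₃ b₄ hb₄ hne34)
      obtain ⟨a₁, ha₁, a₂, ha₂, hane⟩ := hA2
      have o11 := quad ((vol_inter_ne_zero_iff a₁ b₁).1 (hcross a₁ ha₁ b₁ hb₁)).1
      have o12 := quad ((vol_inter_ne_zero_iff a₁ b₂).1 (hcross a₁ ha₁ b₂ hb₂)).1
      have o21 := quad ((vol_inter_ne_zero_iff a₂ b₁).1 (hcross a₂ ha₂ b₁ hb₁)).1
      have o22 := quad ((vol_inter_ne_zero_iff a₂ b₂).1 (hcross a₂ ha₂ b₂ hb₂)).1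
      have p13 := quad ((vol_inter_ne_zero_iff a₁ b₃).1 (hcross a₁ ha₁ b₃ hb₃)).2
      have p14 := quad ((vol_inter_ne_zero_iff a₁ b₄).1 (hcross a₁ ha₁ b₄ hb₄)).2
      have p23 := quad ((vol_inter_ne_zero_iff a₂ b₃).1 (hcross a₂ ha₂ b₃ hb₃)).2
      have p24 := quad ((vol_inter_ne_zero_iff a₂ b₄).1 (hcross a₂ ha₂ b₄ hb₄)).2
      -- a₁.a < b₁.b, a₁.a < b₂.b, b₁.a < a₁.b, b₂.a < a₁.b, etc.
      have hxover : max a₁.a a₂.a < min a₁.b a₂.b := by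
        have c1 : a₁.a < max b₁.a b₂.a := lt_of_lt_of_le (lt_min o11.2.1 o12.2.1) hx12
        have c2 : a₂.a < max b₁.a b₂.a := lt_of_lt_of_le (lt_min o21.2.1 o22.2.1) hx12
        have d1 : max b₁.a b₂.a < a₁.b := max_lt o11.2.2.1 o12.2.2.1
        have d2 : max b₁.a b₂.a < a₂.b := max_lt o21.2.2.1 o22.2.2.1
        exact max_lt (lt_min (c1.trans d1) (c1.trans d2))
          (lt_min (c2.trans d1) (c2.trans d2))
      have hyover : max a₁.c a₂.c < min a₁.d a₂.d := by
        have c1 : a₁.c < max b₃.c b₄.c := lt_of_lt_of_le (lt_min p13.2.1 p14.2.1) hy34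
        have c2 : a₂.c < max b₃.c b₄.c := lt_of_lt_of_le (lt_min p23.2.1 p24.2.1) hy34
        have d1 : max b₃.c b₄.c < a₁.d := max_lt p13.2.2.1 p14.2.2.1
        have d2 : max b₃.c b₄.c < a₂.d := max_lt p23.2.2.1 p24.2.2.1
        exact max_lt (lt_min (c1.trans d1) (c1.trans d2))
          (lt_min (c2.trans d1) (c2.trans d2))
      exact (vol_inter_ne_zero_iff a₁ a₂).2 ⟨hxover, hyover⟩
        (hApair a₁ ha₁ a₂ ha₂ hane)

lemma vol_rect_ne_zero (Q : Rect) : volume Q.set ≠ 0 := by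
  have : Q.set = Set.Icc Q.a Q.b ×ˢ Set.Icc Q.c Q.d := rfl
  rw [this, vol_Icc_prod, Ne, mul_eq_zero, ENNReal.ofReal_eq_zero, ENNReal.ofReal_eq_zero]
  push_neg
  exact ⟨by linarith [Q.hab], by linarith [Q.hcd]⟩

lemma aux (r : ℝ) (hr : 1 ≤ r) :
    ∀ n : ℕ, 2 ≤ n → ∀ G : Fin n → Finset Rect,
      (∀ i, (2 * ⌈r⌉ + 2) * (n : ℤ) - (3 * ⌈r⌉ + 2) ≤ ((G i).card : ℤ)) →
      (∀ i, ∀ Q ∈ G i, Q.Fat r) →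
      (∀ i, ∀ Q ∈ G i, ∀ Q' ∈ G i, Q ≠ Q' → volume (Q.set ∩ Q'.set) = 0) →
      ∃ g : Fin n → Rect, (∀ i, g i ∈ G i) ∧
        ∀ i j, i ≠ j → volume ((g i).set ∩ (g j).set) = 0 := by
  have hc1 : (1 : ℤ) ≤ ⌈r⌉ := by
    calc (1 : ℤ) = ⌈(1 : ℝ)⌉ := by rw [Int.ceil_one]
      _ ≤ ⌈r⌉ := Int.ceil_le_ceil hr
  intro n hn
  induction n, hn using Nat.le_induction with
  | base =>
    intro G hcard hfat hdisj
    classical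
    have hA2 : ∀ i : Fin 2, ∃ a₁ ∈ G i, ∃ a₂ ∈ G i, a₁ ≠ a₂ := by
      intro i
      apply Finset.one_lt_card.1
      have := hcard i
      have : (1 : ℤ) < ((G i).card : ℤ) := by push_cast at this ⊢; linarith
      exact_mod_cast this
    have hBcard : ∀ i : Fin 2, ⌈r⌉ + 2 ≤ ((G i).card : ℤ) := by
      intro i
      have := hcard i
      push_cast at this
      linarith
    have key : ∃ Q₀ ∈ G 0, ∃ Q₁ ∈ G 1, volume (Q₀.set ∩ Q₁.set) = 0 := by
      by_contra hcon
      push_neg at hcon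
      have hS : (Finset.univ.biUnion G).Nonempty := by
        obtain ⟨a₁, ha₁, -⟩ := hA2 0
        exact ⟨a₁, Finset.mem_biUnion.2 ⟨0, Finset.mem_univ _, ha₁⟩⟩
      obtain ⟨R, hRS, hRmin⟩ := Finset.exists_min_image _ Rect.short hS
      have hRmin' : ∀ i : Fin 2, ∀ Q ∈ G i, R.short ≤ Q.short := fun i Q hQ =>
        hRmin Q (Finset.mem_biUnion.2 ⟨i, Finset.mem_univ _, hQ⟩)
      obtain ⟨i₀, -, hRmem⟩ := Finset.mem_biUnion.1 hRS
      have hcross01 : ∀ a ∈ G 0, ∀ b ∈ G 1, volume (a.set ∩ b.set) ≠ 0 := hcon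
      have hcross10 : ∀ a ∈ G 1, ∀ b ∈ G 0, volume (a.set ∩ b.set) ≠ 0 := by
        intro a ha b hb
        rw [Set.inter_comm]
        exact hcon b hb a ha
      fin_cases i₀
      · exact base_helper r hr (G 0) (G 1) (hA2 0) (hBcard 1) (hdisj 0) (hdisj 1)
          hcross01 R hRmem (hfat 0 R hRmem) (hRmin' 1)
      · exact base_helper r hr (G 1) (G 0) (hA2 1) (hBcard 0) (hdisj 1) (hdisj 0)
          hcross10 R hRmem (hfat 1 R hRmem) (hRmin' 0)
    obtain ⟨Q₀, h0, Q₁, h1, hv⟩ := key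
    refine ⟨fun i => if i = 0 then Q₀ else Q₁, ?_, ?_⟩
    · intro i
      fin_cases i
      · simpa using h0
      · simpa using h1
    · intro i j hij
      fin_cases i <;> fin_cases j <;> simp_all
      rw [Set.inter_comm]
      exact hv
  | succ n hn ih =>
    intro G hcard hfat hdisj
    classical
    have hn' : (2 : ℤ) ≤ (n : ℤ) := by exact_mod_cast hn
    have hS : (Finset.univ.biUnion G).Nonempty := by
      have h0 : (0 : ℤ) < ((G 0).card : ℤ) := by
        have := hcard 0
        push_cast at this
        nlinarith
      have : (G 0).Nonempty := Finset.card_pos.1 (by exact_mod_cast h0)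
      obtain ⟨a, ha⟩ := this
      exact ⟨a, Finset.mem_biUnion.2 ⟨0, Finset.mem_univ _, ha⟩⟩
    obtain ⟨R, hRS, hRmin⟩ := Finset.exists_min_image _ Rect.short hS
    obtain ⟨i₀, -, hRmem⟩ := Finset.mem_biUnion.1 hRS
    have hRmin' : ∀ i, ∀ Q ∈ G i, R.short ≤ Q.short := fun i Q hQ =>
      hRmin Q (Finset.mem_biUnion.2 ⟨i, Finset.mem_univ _, hQ⟩)
    set G' : Fin n → Finset Rect :=
      fun k => (G (i₀.succAbove k)).filter (fun Q => volume (Q.set ∩ R.set) = 0) with hG'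
    have hG'card : ∀ k, (2 * ⌈r⌉ + 2) * (n : ℤ) - (3 * ⌈r⌉ + 2) ≤ ((G' k).card : ℤ) := by
      intro k
      have hsplit := Finset.card_filter_add_card_filter_not
        (s := G (i₀.succAbove k)) (p := fun Q => volume (Q.set ∩ R.set) = 0)
      have hbad : (((G (i₀.succAbove k)).filter
          (fun Q => ¬ volume (Q.set ∩ R.set) = 0)).card : ℤ) ≤ 2 * ⌈r⌉ + 2 := by
        apply block_count r hr R (hfat i₀ R hRmem)
        · intro Q hQ
          exact hRmin' _ Q (Finset.mem_filter.1 hQ).1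
        · intro Q hQ Q' hQ' hne
          exact hdisj _ Q (Finset.mem_filter.1 hQ).1 Q' (Finset.mem_filter.1 hQ').1 hne
        · intro Q hQ
          exact (Finset.mem_filter.1 hQ).2
      have htot := hcard (i₀.succAbove k)
      have : ((G (i₀.succAbove k)).card : ℤ)
          = ((G' k).card : ℤ) + (((G (i₀.succAbove k)).filter
            (fun Q => ¬ volume (Q.set ∩ R.set) = 0)).card : ℤ) := by
        rw [hG']
        exact_mod_cast hsplit.symm
      push_cast at htot this ⊢
      linarith
    obtain ⟨g, hgmem, hgdisj⟩ := ih G' hG'card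
      (fun k Q hQ => hfat _ Q (Finset.mem_filter.1 hQ).1)
      (fun k Q hQ Q' hQ' hne =>
        hdisj _ Q (Finset.mem_filter.1 hQ).1 Q' (Finset.mem_filter.1 hQ').1 hne)
    refine ⟨fun i => if h : i = i₀ then R else g (Fin.exists_succAbove_eq h).choose, ?_, ?_⟩
    · intro i
      dsimp only
      by_cases h : i = i₀
      · rw [dif_pos h, h]
        exact hRmem
      · rw [dif_neg h]
        have hspec := (Fin.exists_succAbove_eq h).choose_spec
        have hmem := (Finset.mem_filter.1 (hgmem (Fin.exists_succAbove_eq h).choose)).1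
        rwa [hspec] at hmem
    · intro i j hij
      dsimp only
      by_cases hi : i = i₀ <;> by_cases hj : j = i₀
      · exact absurd (hi.trans hj.symm) hij
      · rw [dif_pos hi, dif_neg hj, Set.inter_comm]
        exact (Finset.mem_filter.1 (hgmem (Fin.exists_succAbove_eq hj).choose)).2
      · rw [dif_neg hi, dif_pos hj]
        exact (Finset.mem_filter.1 (hgmem (Fin.exists_succAbove_eq hi).choose)).2
      · rw [dif_neg hi, dif_neg hj]
        apply hgdisj
        intro he
        apply hij
        have si := (Fin.exists_succAbove_eq hi).choose_spec
        have sj := (Fin.exists_succAbove_eq hj).choose_spec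
        rw [← si, ← sj, he]

end StmtAux

/-- From `n` families of at least `N = (2⌈r⌉+2)n − (3⌈r⌉+2)` pairwise disjoint
`r`-fat rectangles each, one can pick pairwise disjoint representatives. -/
theorem stmt6 (r : ℝ) (hr : 1 ≤ r) (n : ℕ) (hn : 2 ≤ n)
    (N : ℕ) (hN : (N : ℤ) = (2 * ⌈r⌉ + 2) * n - (3 * ⌈r⌉ + 2))
    (M : Fin n → ℕ) (hM : ∀ i, N ≤ M i)
    (F : (i : Fin n) → Fin (M i) → Rect)
    (hfat : ∀ i j, (F i j).Fat r)
    (hdisj : ∀ i, ∀ j k, j ≠ k → volume ((F i j).set ∩ (F i k).set) = 0) :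
    ∃ σ : (i : Fin n) → Fin (M i), ∀ i j, i ≠ j →
      volume ((F i (σ i)).set ∩ (F j (σ j)).set) = 0 := by

  classical
  have hinj : ∀ i, Function.Injective (F i) := by
    intro i j k he
    by_contra hne
    have h0 := hdisj i j k hne
    rw [he, Set.inter_self] at h0
    exact StmtAux.vol_rect_ne_zero _ h0
  set G : Fin n → Finset Rect := fun i => Finset.image (F i) Finset.univ with hG
  have hGcard : ∀ i, (2 * ⌈r⌉ + 2) * (n : ℤ) - (3 * ⌈r⌉ + 2) ≤ ((G i).card : ℤ) := by
    intro i
    rw [hG]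
    rw [Finset.card_image_of_injective _ (hinj i), Finset.card_univ, Fintype.card_fin]
    rw [← hN]
    exact_mod_cast hM i
  have hGfat : ∀ i, ∀ Q ∈ G i, Q.Fat r := by
    intro i Q hQ
    obtain ⟨j, -, rfl⟩ := Finset.mem_image.1 hQ
    exact hfat i j
  have hGdisj : ∀ i, ∀ Q ∈ G i, ∀ Q' ∈ G i, Q ≠ Q' → volume (Q.set ∩ Q'.set) = 0 := by
    intro i Q hQ Q' hQ' hne
    obtain ⟨j, -, rfl⟩ := Finset.mem_image.1 hQ
    obtain ⟨k, -, rfl⟩ := Finset.mem_image.1 hQ'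
    exact hdisj i j k (fun h => hne (by rw [h]))
  obtain ⟨g, hg1, hg2⟩ := StmtAux.aux r hr n hn G hGcard hGfat hGdisj
  have hex : ∀ i, ∃ j, F i j = g i := by
    intro i
    obtain ⟨j, -, hj⟩ := Finset.mem_image.1 (hg1 i)
    exact ⟨j, hj⟩
  choose σ hσ using hex
  refine ⟨σ, fun i j hij => ?_⟩
  rw [hσ i, hσ j]
  exact hg2 i j hij
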